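/- arXiv:quant-ph/0503138 — 4 statements merged into one kernel-verified Lean document; each statement's English description precedes it below -/
import Mathlib

section
/- No linear partial erasure of an arbitrary qubit: there is no linear map L : ℂ²⊗H_A → ℂ²⊗H_A such that for every θ ∈ [0,π], φ ∈ [0,2π), L(|θ,φ⟩⊗|A⟩) = c(θ,φ)·|θ,0⟩⊗|A_{θ,φ}⟩ for unit vectors |A_{θ,φ}⟩ and nonzero scalars c, provided L must also act consistently (linearly) on the basis |0⟩,|1⟩. Concretely: if L(|0⟩⊗|A⟩) = |v₀⟩⊗|a₀⟩ and L(|1⟩⊗|A⟩) = |v₁⟩⊗|a₁⟩, then by linearity L((α|0⟩+β|1⟩)⊗|A⟩) = α|v₀⟩⊗|a₀⟩ + β|v₁⟩⊗|a₁⟩, which is a product state for all α, β only if |a₀⟩ and |a₁⟩ are parallel or |v₀⟩ and |v₁⟩ are parallel. -/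
open scoped TensorProduct

/-- No linear partial erasure of an arbitrary qubit.  Concretely: if a
linear map `L : ℂ² ⊗ H_A → ℂ² ⊗ H_A` satisfies `L(|0⟩⊗|A⟩) = v₀⊗a₀` and
`L(|1⟩⊗|A⟩) = v₁⊗a₁`, then by linearity `L((α|0⟩+β|1⟩)⊗|A⟩) = α v₀⊗a₀ + β v₁⊗a₁`,
which is a product state for all `α, β` only if `v₀, v₁` are parallel (linearly
dependent) or `a₀, a₁` are parallel. -/
theorem no_linear_partial_erasure_of_qubit
    {M : Type*} [AddCommGroup M] [Module ℂ M]
    (L : TensorProduct ℂ (Fin 2 → ℂ) M →ₗ[ℂ] TensorProduct ℂ (Fin 2 → ℂ) M)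
    (Av : M) (v₀ v₁ : Fin 2 → ℂ) (a₀ a₁ : M)
    (h0 : L ((![1, 0] : Fin 2 → ℂ) ⊗ₜ[ℂ] Av) = v₀ ⊗ₜ[ℂ] a₀)
    (h1 : L ((![0, 1] : Fin 2 → ℂ) ⊗ₜ[ℂ] Av) = v₁ ⊗ₜ[ℂ] a₁)
    (hprod : ∀ α β : ℂ, ∃ (u : Fin 2 → ℂ) (w : M),
      L ((α • ![1, 0] + β • ![0, 1] : Fin 2 → ℂ) ⊗ₜ[ℂ] Av) = u ⊗ₜ[ℂ] w) :
    ¬ LinearIndependent ℂ ![v₀, v₁] ∨ ¬ LinearIndependent ℂ ![a₀, a₁] := by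
  by_contra h
  push_neg at h
  obtain ⟨hv, ha⟩ := h
  -- v₀, v₁ form a basis of ℂ²
  have hcard : Fintype.card (Fin 2) = Module.finrank ℂ (Fin 2 → ℂ) := by simp [Module.finrank_fin_fun]
  let b : Module.Basis (Fin 2) ℂ (Fin 2 → ℂ) := basisOfLinearIndependentOfCardEqFinrank hv hcard
  have hb : ∀ i, b i = ![v₀, v₁] i := fun i =>
    coe_basisOfLinearIndependentOfCardEqFinrank hv hcard ▸ rfl
  -- functionals
  let T : ((Fin 2 → ℂ) →ₗ[ℂ] ℂ) → (TensorProduct ℂ (Fin 2 → ℂ) M →ₗ[ℂ] M) :=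
    fun f => TensorProduct.lift ((LinearMap.lsmul ℂ M).comp f)
  have hT : ∀ f x m, T f (x ⊗ₜ[ℂ] m) = f x • m := fun f x m => rfl
  obtain ⟨u, w, huw⟩ := hprod 1 1
  have hlin : L (((1:ℂ) • ![1, 0] + (1:ℂ) • ![0, 1] : Fin 2 → ℂ) ⊗ₜ[ℂ] Av)
      = v₀ ⊗ₜ[ℂ] a₀ + v₁ ⊗ₜ[ℂ] a₁ := by
    rw [one_smul, one_smul, TensorProduct.add_tmul, map_add, h0, h1]
  have key : v₀ ⊗ₜ[ℂ] a₀ + v₁ ⊗ₜ[ℂ] a₁ = u ⊗ₜ[ℂ] w := by rw [← hlin, huw]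
  have hb0 : b 0 = v₀ := hb 0
  have hb1 : b 1 = v₁ := hb 1
  have c00 : b.coord 0 (b 0) = 1 := by simp
  have c01 : b.coord 0 (b 1) = 0 := by simp [Module.Basis.coord_apply, Module.Basis.repr_self]
  have c10 : b.coord 1 (b 0) = 0 := by simp [Module.Basis.coord_apply, Module.Basis.repr_self]
  have c11 : b.coord 1 (b 1) = 1 := by simp
  rw [hb0] at c00 c10
  rw [hb1] at c01 c11
  have e0 : a₀ = b.coord 0 u • w := by
    have := congrArg (T (b.coord 0)) key
    simp only [map_add, hT, c00, c01, one_smul, zero_smul, add_zero] at this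
    exact this
  have e1 : a₁ = b.coord 1 u • w := by
    have := congrArg (T (b.coord 1)) key
    simp only [map_add, hT, c10, c11, one_smul, zero_smul, zero_add] at this
    exact this
  -- a₀, a₁ are both multiples of w: contradiction with independence
  rw [LinearIndependent.pair_iff] at ha
  set c := b.coord 0 u with hc
  set d := b.coord 1 u with hd
  by_cases hc0 : c = 0
  · have : a₀ = 0 := by rw [e0, hc0, zero_smul]
    have := (ha 1 0 (by rw [this, smul_zero, zero_smul, add_zero])).1
    exact one_ne_zero this
  · have : d • a₀ + (-c) • a₁ = 0 := by
      rw [e0, e1, smul_smul, smul_smul]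
      ring_nf
      module
    exact hc0 (neg_eq_zero.mp (ha d (-c) this).2)
end

section
/- No universal NOT from linearity: there is no antilinear structure realizable by a linear map, i.e., there is no linear map T : ℂ² → ℂ² such that T|θ,φ⟩ is proportional to the orthogonal complement state |θ,φ⟩^⊥ = e^{−iφ} sin(θ/2)|0⟩ − cos(θ/2)|1⟩, for all θ ∈ [0,π], φ ∈ [0,2π). -/
/-- The qubit state `|θ,φ⟩ = cos(θ/2)|0⟩ + e^{iφ} sin(θ/2)|1⟩` as a vector of `ℂ²`. -/
noncomputable def qubitVec (θ φ : ℝ) : Fin 2 → ℂ :=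
  ![(Real.cos (θ / 2) : ℂ), Complex.exp (φ * Complex.I) * (Real.sin (θ / 2) : ℂ)]

/-- The orthogonal complement state `|θ,φ⟩^⊥ = e^{−iφ} sin(θ/2)|0⟩ − cos(θ/2)|1⟩`. -/
noncomputable def qubitPerp (θ φ : ℝ) : Fin 2 → ℂ :=
  ![Complex.exp (-(φ : ℂ) * Complex.I) * (Real.sin (θ / 2) : ℂ), -(Real.cos (θ / 2) : ℂ)]

noncomputable abbrev aC : ℂ := ((Real.sqrt 2 / 2 : ℝ) : ℂ)

lemma aC_ne_zero : aC ≠ 0 := by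
  simp only [aC, ne_eq, Complex.ofReal_eq_zero, div_eq_zero_iff]
  push_neg
  constructor
  · positivity
  · norm_num

lemma vA : qubitVec 0 0 = ![1, 0] := by simp [qubitVec]
lemma pA : qubitPerp 0 0 = ![0, -1] := by simp [qubitPerp]
lemma vB : qubitVec Real.pi 0 = ![0, 1] := by simp [qubitVec]
lemma pB : qubitPerp Real.pi 0 = ![1, 0] := by simp [qubitPerp]

lemma vC : qubitVec (Real.pi/2) 0 = ![aC, aC] := by
  have h : Real.pi/2/2 = Real.pi/4 := by ring
  simp [qubitVec, h, Real.cos_pi_div_four, Real.sin_pi_div_four]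

lemma pC : qubitPerp (Real.pi/2) 0 = ![aC, -aC] := by
  have h : Real.pi/2/2 = Real.pi/4 := by ring
  simp [qubitPerp, h, Real.cos_pi_div_four, Real.sin_pi_div_four]

lemma vD : qubitVec (Real.pi/2) (Real.pi/2) = ![aC, Complex.I * aC] := by
  have h : Real.pi/2/2 = Real.pi/4 := by ring
  have he : Complex.exp (((Real.pi/2 : ℝ):ℂ) * Complex.I) = Complex.I := by
    rw [Complex.exp_mul_I]
    simp [← Complex.ofReal_cos, ← Complex.ofReal_sin]
  simp only [qubitVec, h, he, Real.cos_pi_div_four, Real.sin_pi_div_four]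

lemma pD : qubitPerp (Real.pi/2) (Real.pi/2) = ![-Complex.I * aC, -aC] := by
  have h : Real.pi/2/2 = Real.pi/4 := by ring
  have he : Complex.exp (-((Real.pi/2 : ℝ):ℂ) * Complex.I) = -Complex.I := by
    have h2 : -((Real.pi/2 : ℝ) : ℂ) * Complex.I = ((-(Real.pi/2) : ℝ) : ℂ) * Complex.I := by
      push_cast; ring
    rw [h2, Complex.exp_mul_I]
    simp [← Complex.ofReal_cos, ← Complex.ofReal_sin]
  simp only [qubitPerp, h, he, Real.cos_pi_div_four, Real.sin_pi_div_four]

lemma decompC : (![aC, aC] : Fin 2 → ℂ) = aC • ![1, 0] + aC • ![0, 1] := by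
  funext i; fin_cases i <;> simp

lemma decompD : (![aC, Complex.I * aC] : Fin 2 → ℂ)
    = aC • ![1, 0] + (Complex.I * aC) • ![0, 1] := by
  funext i; fin_cases i <;> simp

/-- No universal NOT from linearity: there is no linear map `T : ℂ² → ℂ²`
such that `T|θ,φ⟩` is proportional (by a nonzero scalar) to the orthogonal complement
state `|θ,φ⟩^⊥` for all `θ ∈ [0,π]`, `φ ∈ [0,2π)`. -/
theorem no_universal_not_gate :
    ¬ ∃ T : (Fin 2 → ℂ) →ₗ[ℂ] (Fin 2 → ℂ),
        ∀ θ φ : ℝ, θ ∈ Set.Icc 0 Real.pi → φ ∈ Set.Ico 0 (2 * Real.pi) →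
          ∃ c : ℂ, c ≠ 0 ∧ T (qubitVec θ φ) = c • qubitPerp θ φ := by
  rintro ⟨T, hT⟩
  have hπ := Real.pi_pos
  obtain ⟨c0, hc0, h0⟩ := hT 0 0 ⟨le_refl 0, hπ.le⟩ ⟨le_refl 0, by linarith⟩
  obtain ⟨c1, hc1, h1⟩ := hT Real.pi 0 ⟨hπ.le, le_refl _⟩ ⟨le_refl 0, by linarith⟩
  obtain ⟨c2, hc2, h2⟩ := hT (Real.pi/2) 0 ⟨by linarith, by linarith⟩ ⟨le_refl 0, by linarith⟩
  obtain ⟨c3, hc3, h3⟩ := hT (Real.pi/2) (Real.pi/2)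
    ⟨by linarith, by linarith⟩ ⟨by linarith, by linarith⟩
  rw [vA, pA] at h0
  rw [vB, pB] at h1
  rw [vC, pC, decompC, map_add, map_smul, map_smul, h0, h1] at h2
  rw [vD, pD, decompD, map_add, map_smul, map_smul, h0, h1] at h3
  -- extract component equations
  have e20 := congrFun h2 0
  have e21 := congrFun h2 1
  have e30 := congrFun h3 0
  have e31 := congrFun h3 1
  simp only [Pi.add_apply, Pi.smul_apply, Matrix.cons_val_zero, Matrix.cons_val_one,
    Matrix.head_cons, smul_eq_mul] at e20 e21 e30 e31
  have ha := aC_ne_zero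
  -- from θ = π/2, φ = 0 : c1 = c2 and c0 = c2
  have hc12 : c1 = c2 := by
    have : aC * c1 = aC * c2 := by linear_combination e20
    exact mul_left_cancel₀ ha this
  have hc02 : c0 = c2 := by
    have : aC * c0 = aC * c2 := by linear_combination -e21
    exact mul_left_cancel₀ ha this
  -- from θ = π/2, φ = π/2 : c1 = -c3 and c0 = c3
  have hc13 : c1 = -c3 := by
    have : (Complex.I * aC) * c1 = (Complex.I * aC) * (-c3) := by linear_combination e30
    exact mul_left_cancel₀ (mul_ne_zero Complex.I_ne_zero ha) this
  have hc03 : c0 = c3 := by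
    have : aC * c0 = aC * c3 := by linear_combination -e31
    exact mul_left_cancel₀ ha this
  exact hc0 (by linear_combination (hc02 - hc12 + hc13 + hc03) / 2)
end

section
/- No-splitting of quantum information: there is no linear map S : ℂ² → ℂ²⊗ℂ² such that S|θ,φ⟩ = |θ,0⟩ ⊗ |π/2,φ⟩ (up to phase) for all θ ∈ (0,π), φ ∈ [0,2π); i.e., no linear map sends each qubit to a product of a 'θ-only' state and a 'φ-only' state. -/
open scoped TensorProduct

noncomputable def crd (i j : Fin 2) :
    TensorProduct ℂ (Fin 2 → ℂ) (Fin 2 → ℂ) →ₗ[ℂ] ℂ :=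
  TensorProduct.lift
    (LinearMap.mk₂ ℂ (fun x y => x i * y j)
      (fun m₁ m₂ n => by simp [add_mul])
      (fun c m n => by simp [smul_eq_mul]; ring)
      (fun m n₁ n₂ => by simp [mul_add])
      (fun c m n => by simp [smul_eq_mul]; ring))

@[simp] lemma crd_tmul (i j : Fin 2) (x y : Fin 2 → ℂ) :
    crd i j (x ⊗ₜ[ℂ] y) = x i * y j := by
  simp [crd]

lemma qubit_decomp (θ φ : ℝ) :
    qubitVec θ φ = (Real.cos (θ / 2) : ℂ) • ![(1:ℂ), 0]
      + (Complex.exp (φ * Complex.I) * (Real.sin (θ / 2) : ℂ)) • ![(0:ℂ), 1] := by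
  funext i
  fin_cases i <;> simp [qubitVec]

lemma arith (s r u0 v0 u1 v1 c1 c2 c3 c4 : ℂ) (hs : s ≠ 0) (hrs : r * s ≠ 0)
    (hr2 : r - 1/2 ≠ 0)
    (hA : s*u0 + s*v0 = c1*(s*s))
    (hB : s*u1 + s*v1 = c1*(s*s))
    (hC : s*u0 - s*v0 = c2*(s*s))
    (hD : s*u1 - s*v1 = -(c2*(s*s)))
    (hE : s*u0 + Complex.I*(s*v0) = c3*(s*s))
    (hF : s*u1 + Complex.I*(s*v1) = c3*s*(Complex.I*s))
    (hG : r*u0 + (1/2)*v0 = c4*(r*s))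
    (hH : r*u1 + (1/2)*v1 = c4*(r*s)) : c4 = 0 := by
  have h1' : u1 + v1 = u0 + v0 :=
    mul_left_cancel₀ hs (by linear_combination hB - hA)
  have h2' : u1 - v1 = v0 - u0 :=
    mul_left_cancel₀ hs (by linear_combination hD + hC)
  have hu1 : u1 = v0 := by linear_combination (h1' + h2')/2
  have hv1 : v1 = u0 := by linear_combination (h1' - h2')/2
  have h3' : u1 + Complex.I*v1 = Complex.I*u0 - v0 :=
    mul_left_cancel₀ hs
      (by linear_combination hF - Complex.I*hE + s*v0*Complex.I_mul_I)
  have hv0 : v0 = 0 := by linear_combination (h3' - hu1 - Complex.I*hv1)/2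
  have hkey : u0 * (r - 1/2) = 0 := by
    linear_combination hG - hH + r*hu1 + (1/2)*hv1 + (r - 1/2)*hv0
  have hu0 : u0 = 0 := by
    rcases mul_eq_zero.mp hkey with h | h
    · exact h
    · exact absurd h hr2
  have hc : c4 * (r*s) = 0 := by
    linear_combination -hH + r*hu1 + (1/2)*hv1 + r*hv0 + (1/2)*hu0
  rcases mul_eq_zero.mp hc with h | h
  · exact h
  · exact absurd h hrs

/-- No-splitting of quantum information: there is no linear map
`S : ℂ² → ℂ²⊗ℂ²` with `S|θ,φ⟩ = |θ,0⟩ ⊗ |π/2,φ⟩` (up to a nonzero phase/scalar)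
for all `θ ∈ (0,π)`, `φ ∈ [0,2π)`. -/
theorem no_splitting_of_quantum_information :
    ¬ ∃ S : (Fin 2 → ℂ) →ₗ[ℂ] TensorProduct ℂ (Fin 2 → ℂ) (Fin 2 → ℂ),
        ∀ θ φ : ℝ, θ ∈ Set.Ioo 0 Real.pi → φ ∈ Set.Ico 0 (2 * Real.pi) →
          ∃ c : ℂ, c ≠ 0 ∧
            S (qubitVec θ φ) = c • (qubitVec θ 0 ⊗ₜ[ℂ] qubitVec (Real.pi / 2) φ) := by
  rintro ⟨S, hS⟩
  have key : ∀ θ φ : ℝ, θ ∈ Set.Ioo 0 Real.pi → φ ∈ Set.Ico 0 (2 * Real.pi) →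
      ∃ c : ℂ, c ≠ 0 ∧ ∀ j : Fin 2,
        (Real.cos (θ/2) : ℂ) * crd 0 j (S ![1,0])
          + Complex.exp (φ * Complex.I) * (Real.sin (θ/2) : ℂ) * crd 0 j (S ![0,1])
        = c * ((Real.cos (θ/2) : ℂ) * qubitVec (Real.pi/2) φ j) := by
    intro θ φ hθ hφ
    obtain ⟨c, hc, hEq⟩ := hS θ φ hθ hφ
    refine ⟨c, hc, fun j => ?_⟩
    have h0 := congrArg (crd 0 j) hEq
    rw [qubit_decomp θ φ] at h0
    simp only [map_add, map_smul, smul_eq_mul, crd_tmul] at h0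
    have hq : qubitVec θ 0 0 = (Real.cos (θ/2) : ℂ) := by simp [qubitVec]
    rw [hq] at h0
    linear_combination h0
  have hpi := Real.pi_pos
  have m1 : Real.pi/2 ∈ Set.Ioo 0 Real.pi := ⟨by linarith, by linarith⟩
  have m2 : Real.pi/3 ∈ Set.Ioo 0 Real.pi := ⟨by linarith, by linarith⟩
  have m0 : (0:ℝ) ∈ Set.Ico 0 (2*Real.pi) := ⟨le_refl _, by linarith⟩
  have mp : Real.pi ∈ Set.Ico 0 (2*Real.pi) := ⟨by linarith, by linarith⟩
  have mp2 : Real.pi/2 ∈ Set.Ico 0 (2*Real.pi) := ⟨by linarith, by linarith⟩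
  obtain ⟨c1, hc1, h1⟩ := key (Real.pi/2) 0 m1 m0
  obtain ⟨c2, hc2, h2⟩ := key (Real.pi/2) Real.pi m1 mp
  obtain ⟨c3, hc3, h3⟩ := key (Real.pi/2) (Real.pi/2) m1 mp2
  obtain ⟨c4, hc4, h4⟩ := key (Real.pi/3) 0 m2 m0
  set u0 := crd 0 0 (S ![1,0]) with hu0def
  set v0 := crd 0 0 (S ![0,1]) with hv0def
  set u1 := crd 0 1 (S ![1,0]) with hu1def
  set v1 := crd 0 1 (S ![0,1]) with hv1def
  have hs : (Real.sqrt 2 : ℂ)/2 ≠ 0 := by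
    refine div_ne_zero ?_ (by norm_num)
    exact_mod_cast Real.sqrt_ne_zero'.mpr (by norm_num)
  have hrr : (Real.sqrt 3 : ℂ)/2 ≠ 0 := by
    refine div_ne_zero ?_ (by norm_num)
    exact_mod_cast Real.sqrt_ne_zero'.mpr (by norm_num)
  have hrs : (Real.sqrt 3 : ℂ)/2 * ((Real.sqrt 2 : ℂ)/2) ≠ 0 := mul_ne_zero hrr hs
  have hsqrt3 : (1:ℝ) < Real.sqrt 3 := by
    nlinarith [Real.sq_sqrt (show (0:ℝ) ≤ 3 by norm_num), Real.sqrt_nonneg 3]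
  have hr2 : (Real.sqrt 3 : ℂ)/2 - 1/2 ≠ 0 := by
    intro h
    have h0 : ((Real.sqrt 3 - 1 : ℝ) : ℂ) = 0 := by push_cast; linear_combination 2*h
    have h' : (Real.sqrt 3 - 1 : ℝ) = 0 := by exact_mod_cast h0
    nlinarith
  -- normalize the eight equations
  have simp1 : Real.pi/2/2 = Real.pi/4 := by ring
  have simp2 : Real.pi/3/2 = Real.pi/6 := by ring
  simp only [simp1, simp2, Real.cos_pi_div_four, Real.sin_pi_div_four,
    Real.cos_pi_div_six, Real.sin_pi_div_six, Complex.ofReal_zero, zero_mul,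
    Complex.exp_zero, Complex.exp_pi_mul_I, qubitVec] at h1 h2 h3 h4
  have hE3 : Complex.exp ((Real.pi/2 : ℝ) * Complex.I) = Complex.I := by
    rw [Complex.exp_mul_I, ← Complex.ofReal_cos, ← Complex.ofReal_sin,
      Real.cos_pi_div_two, Real.sin_pi_div_two]
    simp
  rw [hE3] at h3  -- may fail under binder; adjust if needed
  have hA := h1 0
  have hB := h1 1
  have hC := h2 0
  have hD := h2 1
  have hE := h3 0
  have hF := h3 1
  have hG := h4 0
  have hH := h4 1
  simp only [Matrix.cons_val_zero, Matrix.cons_val_one, Matrix.head_cons] at hA hB hC hD hE hF hG hH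
  push_cast at hA hB hC hD hE hF hG hH
  refine absurd (arith ((Real.sqrt 2 : ℂ)/2) ((Real.sqrt 3 : ℂ)/2) u0 v0 u1 v1 c1 c2 c3 c4 hs hrs hr2 ?_ ?_ ?_ ?_ ?_ ?_ ?_ ?_) hc4
  · linear_combination hA
  · linear_combination hB
  · linear_combination hC
  · linear_combination hD
  · linear_combination hE
  · linear_combination hF
  · linear_combination hG
  · linear_combination hH
end

section
/- No linear map on ℂ^d collapses two fixed distinct basis-phase patterns: if L : ℂ^d ⊗ H_A → ℂ^d ⊗ H_A is linear with L(|n⟩⊗|A⟩) = |ω_n⟩⊗|a_n⟩ for an orthonormal basis {|n⟩}, and the vectors {|ω_n⟩⊗|a_n⟩} are such that at least two of the |a_n⟩ are linearly independent and the corresponding |ω_n⟩ are linearly independent, then there exists a unit vector |Ω⟩ = Σ_n c_n |n⟩ (with at least two nonzero coefficients at those indices) for which L(|Ω⟩⊗|A⟩) is not a product vector; hence L cannot implement partial erasure (pure-to-pure, ancilla-factored) on all of ℂ^d. -/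
open scoped TensorProduct

lemma exists_dual_pair' {K V : Type*} [Field K] [AddCommGroup V] [Module K V]
    {v : Fin 2 → V} (hv : LinearIndependent K v) :
    ∃ f : V →ₗ[K] K, f (v 0) = 1 ∧ f (v 1) = 0 := by
  set B : Module.Basis (Fin 2) K (Submodule.span K (Set.range v)) := Module.Basis.span hv
  obtain ⟨g, hg⟩ := LinearMap.exists_extend (B.coord 0)
  refine ⟨g, ?_, ?_⟩
  · have : g ((Submodule.span K (Set.range v)).subtype (B 0)) = B.coord 0 (B 0) := by
      rw [← LinearMap.comp_apply, hg]
    simpa [B, Module.Basis.span_apply] using this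
  · have : g ((Submodule.span K (Set.range v)).subtype (B 1)) = B.coord 0 (B 1) := by
      rw [← LinearMap.comp_apply, hg]
    simpa [B, Module.Basis.span_apply, Module.Basis.coord_apply] using this

lemma key_not_product {V M : Type*} [AddCommGroup V] [Module ℂ V]
    [AddCommGroup M] [Module ℂ M] {v₁ v₂ : V} {a₁ a₂ : M}
    (hv : LinearIndependent ℂ ![v₁, v₂]) (ha : LinearIndependent ℂ ![a₁, a₂])
    {c₁ c₂ : ℂ} (h₁ : c₁ ≠ 0) (h₂ : c₂ ≠ 0) (u : V) (m : M) :
    c₁ • (v₁ ⊗ₜ[ℂ] a₁) + c₂ • (v₂ ⊗ₜ[ℂ] a₂) ≠ u ⊗ₜ[ℂ] m := by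
  intro heq
  obtain ⟨f, hf1, hf2⟩ := exists_dual_pair' hv
  have hv' : LinearIndependent ℂ ![v₂, v₁] := by
    have := hv.comp ![1, 0] (by decide)
    convert this using 1
    ext k
    fin_cases k <;> rfl
  obtain ⟨g, hg1, hg2⟩ := exists_dual_pair' hv'
  simp only [Matrix.cons_val_zero, Matrix.cons_val_one, Matrix.head_cons] at hf1 hf2 hg1 hg2
  obtain ⟨ha2, ha12⟩ := linearIndependent_fin2.mp ha
  simp only [Matrix.cons_val_zero, Matrix.cons_val_one, Matrix.head_cons] at ha2 ha12
  -- functional applied to tensors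
  have apply_fun_tensor : ∀ (φ : V →ₗ[ℂ] ℂ) (x : V) (y : M),
      ((TensorProduct.lid ℂ M).toLinearMap ∘ₗ φ.rTensor M) (x ⊗ₜ[ℂ] y) = φ x • y := by
    intro φ x y
    simp [LinearMap.rTensor_tmul, TensorProduct.lid_tmul]
  have e1 : c₁ • a₁ = f u • m := by
    have := congrArg ((TensorProduct.lid ℂ M).toLinearMap ∘ₗ f.rTensor M) heq
    simpa [map_add, map_smul, apply_fun_tensor, hf1, hf2] using this
  have e2 : c₂ • a₂ = g u • m := by
    have := congrArg ((TensorProduct.lid ℂ M).toLinearMap ∘ₗ g.rTensor M) heq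
    simpa [map_add, map_smul, apply_fun_tensor, hg1, hg2] using this
  have hgu : g u ≠ 0 := by
    intro h
    rw [h, zero_smul] at e2
    exact ha2 (by simpa [h₂] using smul_eq_zero.mp e2.symm.symm |>.resolve_left h₂)
  have hm : m = (g u)⁻¹ • (c₂ • a₂) := by rw [e2, smul_smul, inv_mul_cancel₀ hgu, one_smul]
  have : ((c₁⁻¹ * f u * (g u)⁻¹ * c₂)) • a₂ = a₁ := by
    have : a₁ = c₁⁻¹ • (c₁ • a₁) := by rw [smul_smul, inv_mul_cancel₀ h₁, one_smul]
    rw [this, e1, hm]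
    simp [smul_smul]
    ring_nf
  exact ha12 _ this

/-- No linear map on `ℂ^d` collapses two fixed distinct basis-phase
patterns: if `L : ℂ^d ⊗ H_A → ℂ^d ⊗ H_A` is linear with `L(|n⟩⊗|A⟩) = |ω_n⟩⊗|a_n⟩`
for an orthonormal basis `{|n⟩}`, and there are indices `i ≠ j` with `ω_i, ω_j`
linearly independent and `a_i, a_j` linearly independent, then there exists a unit
vector `|Ω⟩` with nonzero components along `|i⟩` and `|j⟩` for which `L(|Ω⟩⊗|A⟩)` is
not a product vector; hence `L` cannot implement partial erasure (pure-to-pure,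
ancilla-factored) on all of `ℂ^d`. -/
theorem no_linear_partial_erasure_qudit
    {d : ℕ} {M : Type*} [AddCommGroup M] [Module ℂ M]
    (b : OrthonormalBasis (Fin d) ℂ (EuclideanSpace ℂ (Fin d)))
    (L : TensorProduct ℂ (EuclideanSpace ℂ (Fin d)) M →ₗ[ℂ]
          TensorProduct ℂ (EuclideanSpace ℂ (Fin d)) M)
    (Av : M) (ω : Fin d → EuclideanSpace ℂ (Fin d)) (a : Fin d → M)
    (hL : ∀ n : Fin d, L (b n ⊗ₜ[ℂ] Av) = ω n ⊗ₜ[ℂ] a n)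
    (i j : Fin d) (hij : i ≠ j)
    (hω : LinearIndependent ℂ ![ω i, ω j]) (ha : LinearIndependent ℂ ![a i, a j]) :
    ∃ Ω : EuclideanSpace ℂ (Fin d), ‖Ω‖ = 1 ∧
      (inner ℂ (b i) Ω : ℂ) ≠ 0 ∧ (inner ℂ (b j) Ω : ℂ) ≠ 0 ∧
      ∀ (u : EuclideanSpace ℂ (Fin d)) (v : M), L (Ω ⊗ₜ[ℂ] Av) ≠ u ⊗ₜ[ℂ] v := by
  have hsqrt : (Real.sqrt 2 : ℝ) ≠ 0 := by positivity
  set c : ℂ := ((Real.sqrt 2 : ℝ) : ℂ)⁻¹ with hc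
  have hcne : c ≠ 0 := by
    simp [hc, Complex.ofReal_ne_zero, hsqrt]
  have hinner0 : (inner ℂ (b i) (b j) : ℂ) = 0 := b.orthonormal.2 hij
  have hinner1 : ∀ k : Fin d, (inner ℂ (b k) (b k) : ℂ) = 1 := by
    intro k
    have := orthonormal_iff_ite.mp b.orthonormal k k
    simpa using this
  refine ⟨c • (b i + b j), ?_, ?_, ?_, ?_⟩
  · rw [norm_smul]
    have hsum : ‖(b i + b j : EuclideanSpace ℂ (Fin d))‖ = Real.sqrt 2 := by
      have h2 : ‖(b i + b j : EuclideanSpace ℂ (Fin d))‖ * ‖(b i + b j : EuclideanSpace ℂ (Fin d))‖ = 2 := by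
        rw [norm_add_sq_eq_norm_sq_add_norm_sq_of_inner_eq_zero _ _ hinner0,
          b.orthonormal.1 i, b.orthonormal.1 j]
        norm_num
      nlinarith [norm_nonneg (b i + b j : EuclideanSpace ℂ (Fin d)), Real.sq_sqrt (by norm_num : (2:ℝ) ≥ 0), Real.sqrt_nonneg 2]
    rw [hsum, hc]
    rw [norm_inv, Complex.norm_real, Real.norm_eq_abs, abs_of_nonneg (Real.sqrt_nonneg 2)]
    field_simp
  · rw [inner_smul_right, inner_add_right, hinner0, hinner1]
    simpa using hcne
  · rw [inner_smul_right, inner_add_right, hinner1]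
    have : (inner ℂ (b j) (b i) : ℂ) = 0 := b.orthonormal.2 hij.symm
    rw [this]
    simpa using hcne
  · intro u v
    have hLe : L ((c • (b i + b j)) ⊗ₜ[ℂ] Av) =
        c • (ω i ⊗ₜ[ℂ] a i) + c • (ω j ⊗ₜ[ℂ] a j) := by
      rw [show (c • (b i + b j)) ⊗ₜ[ℂ] Av = c • ((b i + b j) ⊗ₜ[ℂ] Av) from
          (TensorProduct.smul_tmul' c _ Av).symm,
        map_smul, TensorProduct.add_tmul, map_add, hL, hL, smul_add]
    rw [hLe]
    exact key_not_product hω ha hcne hcne u v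
end
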